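/- In the setting of the previous context, the first component of Σ_{s,t}(a)^{-1} w satisfies a |(Σ_{s,t}(a)^{-1} w)₁| ≤ sqrt( m̃_{s,t} / ((t−s) m_{s,t}) ) · sqrt( a ⟨Σ_{s,t}(a)^{-1} w, w⟩ ), for all w ∈ ℝ². -/

import Mathlib

open MeasureTheory intervalIntegral Matrix

set_option maxHeartbeats 1000000 in
theorem stmt10 (T a : ℝ) (ha : 0 < a) (A : ℝ → ℝ) (hA : ContinuousOn A (Set.Icc 0 T))
    (s t : ℝ) (hs : 0 ≤ s) (hst : s < t) (htT : t ≤ T)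
    (hm : 0 < (t - s)⁻¹ * ∫ r in s..t, (A r - (t - s)⁻¹ * ∫ u in s..t, A u) ^ 2)
    (w : Fin 2 → ℝ) :
    a * |((a • !![t - s, -(∫ r in s..t, (A r - A s));
                  -(∫ r in s..t, (A r - A s)), ∫ r in s..t, (A r - A s) ^ 2])⁻¹.mulVec w) 0|
      ≤ Real.sqrt (((t - s)⁻¹ * ∫ r in s..t, (A r - A s) ^ 2)
            / ((t - s)
                * ((t - s)⁻¹ * ∫ r in s..t, (A r - (t - s)⁻¹ * ∫ u in s..t, A u) ^ 2)))
        * Real.sqrt (a *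
            ((a • !![t - s, -(∫ r in s..t, (A r - A s));
                     -(∫ r in s..t, (A r - A s)),
                     ∫ r in s..t, (A r - A s) ^ 2])⁻¹.mulVec w ⬝ᵥ w)) := by
  have hτ : (0:ℝ) < t - s := sub_pos.mpr hst
  have hAc : ContinuousOn A (Set.Icc s t) := hA.mono (Set.Icc_subset_Icc hs htT)
  have hf : IntervalIntegrable (fun r => A r - A s) volume s t := by
    apply ContinuousOn.intervalIntegrable
    rw [Set.uIcc_of_le hst.le]
    exact hAc.sub continuousOn_const
  have hf2 : IntervalIntegrable (fun r => (A r - A s) ^ 2) volume s t := by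
    apply ContinuousOn.intervalIntegrable
    rw [Set.uIcc_of_le hst.le]
    exact (hAc.sub continuousOn_const).pow 2
  have hAint : IntervalIntegrable A volume s t := by
    apply ContinuousOn.intervalIntegrable
    rw [Set.uIcc_of_le hst.le]; exact hAc
  set τ := t - s with hτdef
  set B := ∫ r in s..t, (A r - A s) with hB
  set C := ∫ r in s..t, (A r - A s) ^ 2 with hC
  -- the mean
  have hμ : τ⁻¹ * ∫ u in s..t, A u = A s + B / τ := by
    have : (∫ u in s..t, A u) = B + τ * A s := by
      rw [hB, intervalIntegral.integral_sub hAint intervalIntegrable_const,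
        intervalIntegral.integral_const]
      simp [hτdef]
    rw [this]; field_simp; ring
  have hI : (∫ r in s..t, (A r - τ⁻¹ * ∫ u in s..t, A u) ^ 2) = C - B ^ 2 / τ := by
    have heq : ∀ r, (A r - τ⁻¹ * ∫ u in s..t, A u) ^ 2
        = (A r - A s) ^ 2 - (2 * (B / τ)) * (A r - A s) + (B / τ) ^ 2 := by
      intro r; rw [hμ]; ring
    rw [intervalIntegral.integral_congr (fun r _ => heq r),
      intervalIntegral.integral_add ((hf2).sub (hf.const_mul _)) intervalIntegrable_const,
      intervalIntegral.integral_sub hf2 (hf.const_mul _),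
      intervalIntegral.integral_const_mul, intervalIntegral.integral_const]
    rw [← hB, ← hC, ← hτdef, smul_eq_mul]
    field_simp; ring
  rw [hI] at hm ⊢
  have h1 : 0 < C - B ^ 2 / τ := by
    rcases mul_pos_iff.mp hm with ⟨_, h⟩ | ⟨h, _⟩
    · exact h
    · exact absurd (inv_pos.mpr hτ) h.asymm
  have hD : 0 < τ * C - B ^ 2 := by
    have h2 := mul_pos hτ h1
    have h3 : B ^ 2 / τ * τ = B ^ 2 := div_mul_cancel₀ _ hτ.ne'
    nlinarith [h2, h3]
  have hCpos : 0 < C := by nlinarith [sq_nonneg B]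
  clear_value τ B C
  set D := τ * C - B ^ 2 with hDdef
  clear_value D
  -- matrix inverse
  set N : Matrix (Fin 2) (Fin 2) ℝ := (a * D)⁻¹ • !![C, B; B, τ] with hN
  have haD : 0 < a * D := mul_pos ha hD
  have hcancel : (a * D)⁻¹ * (a * D) = 1 := inv_mul_cancel₀ haD.ne'
  have hMN : (a • !![τ, -B; -B, C]) * N = 1 := by
    ext i j
    fin_cases i <;> fin_cases j <;>
      simp [hN, Matrix.mul_apply, Fin.sum_univ_two, Matrix.one_apply]
    all_goals try ring
    all_goals linear_combination hcancel - a * (a * D)⁻¹ * hDdef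
  have hinv : (a • !![τ, -B; -B, C])⁻¹ = N := inv_eq_right_inv hMN
  rw [hinv]
  have hmv0 : N.mulVec w 0 = (a * D)⁻¹ * (C * w 0 + B * w 1) := by
    simp [hN, Matrix.mulVec, dotProduct, Fin.sum_univ_two]; ring
  have hdot : N.mulVec w ⬝ᵥ w
      = (a * D)⁻¹ * (C * w 0 ^ 2 + 2 * B * w 0 * w 1 + τ * w 1 ^ 2) := by
    simp [hN, Matrix.mulVec, dotProduct, Fin.sum_univ_two]; ring
  rw [hmv0, hdot]
  set Q := C * w 0 ^ 2 + 2 * B * w 0 * w 1 + τ * w 1 ^ 2 with hQ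
  clear_value Q
  have key : C * Q - (C * w 0 + B * w 1) ^ 2 = D * (w 1) ^ 2 := by
    rw [hQ, hDdef]; ring
  have hx2 : (C * w 0 + B * w 1) ^ 2 ≤ C * Q := by
    nlinarith [mul_nonneg hD.le (sq_nonneg (w 1)), key]
  have hQnn : 0 ≤ Q := by
    by_contra h
    push_neg at h
    nlinarith [le_trans (sq_nonneg (C * w 0 + B * w 1)) hx2]
  -- simplify both sides
  have hLHS : a * |(a * D)⁻¹ * (C * w 0 + B * w 1)| = |C * w 0 + B * w 1| / D := by
    rw [abs_mul, abs_of_pos (inv_pos.mpr haD)]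
    field_simp
  have hsq1 : τ⁻¹ * C / (τ * (τ⁻¹ * (C - B ^ 2 / τ))) = C / D := by
    rw [hDdef]
    rw [hDdef] at hD
    have e1 : τ * (τ⁻¹ * (C - B ^ 2 / τ)) = C - B ^ 2 / τ := by
      field_simp
    rw [e1, div_eq_div_iff h1.ne' hD.ne']
    field_simp
    all_goals try ring
    all_goals exact Or.inl trivial
  have hsq2 : a * ((a * D)⁻¹ * Q) = Q / D := by
    field_simp
  rw [hLHS, hsq1, hsq2]
  rw [← Real.sqrt_mul (by positivity : (0:ℝ) ≤ C / D),
    show C / D * (Q / D) = C * Q * (D⁻¹) ^ 2 by ring,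
    Real.sqrt_mul (by positivity : (0:ℝ) ≤ C * Q),
    Real.sqrt_sq (by positivity : (0:ℝ) ≤ D⁻¹)]
  have habs : |C * w 0 + B * w 1| ≤ Real.sqrt (C * Q) := by
    rw [← Real.sqrt_sq_eq_abs]
    exact Real.sqrt_le_sqrt hx2
  rw [div_eq_mul_inv]
  gcongr
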